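/- Let n ∈ ℕ, n ≥ 1, let η : Fin n → Fin n → ℝ be nonnegative with η h k ≤ η̄ (η̄ > 0) for all h, k, let B : Fin n → Fin n → Fin n → ℝ be nonnegative with ∑_{i} B i h k = 1 for all h, k, let μ : Fin n → Fin n → ℝ with |μ i k| ≤ μ̄ (μ̄ > 0) for all i, k, and let λ : Fin n → ℝ with |λ i| ≤ λ̄ (λ̄ > 0) for all i. Define the full kinetic operator P : (Fin n → ℝ) → (Fin n → ℝ) by (P f) i = ∑_{h,k} η h k · B i h k · f h · f k − f i · ∑_{k} η i k · f k + f i · ∑_{k} η i k · μ i k · f k + λ i · f i. Then for every c > 0 and all f, g : Fin n → ℝ with ∑_h |f h| ≤ c and ∑_h |g h| ≤ c, one has ∑_{i} |(P f) i − (P g) i| ≤ (4 η̄ c + 2 η̄ μ̄ c + λ̄) · ∑_{i} |f i − g i|. In particular, P is locally Lipschitz on Fin n → ℝ with respect to the ℓ¹ norm. -/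

import Mathlib

/-- Combined Lipschitz estimate for the full kinetic operator P (inequalities
(eqth16)-(eqth17) in the proof of Theorem 1); in particular P is locally
Lipschitz with respect to the ℓ¹ norm. -/
theorem stmt_5 (n : ℕ) (hn : 1 ≤ n)
    (η : Fin n → Fin n → ℝ) (ηbar : ℝ) (hηbar : 0 < ηbar)
    (hη : ∀ h k, 0 ≤ η h k) (hηle : ∀ h k, η h k ≤ ηbar)
    (B : Fin n → Fin n → Fin n → ℝ) (hB : ∀ i h k, 0 ≤ B i h k)
    (hBsum : ∀ h k, ∑ i, B i h k = 1)
    (μ : Fin n → Fin n → ℝ) (μbar : ℝ) (hμbar : 0 < μbar)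
    (hμle : ∀ i k, |μ i k| ≤ μbar)
    (lam : Fin n → ℝ) (lambar : ℝ) (hlambar : 0 < lambar)
    (hlamle : ∀ i, |lam i| ≤ lambar)
    (c : ℝ) (hc : 0 < c) (f g : Fin n → ℝ)
    (hf : ∑ h, |f h| ≤ c) (hg : ∑ h, |g h| ≤ c) :
    ∑ i, |((∑ h, ∑ k, η h k * B i h k * f h * f k)
            - f i * (∑ k, η i k * f k)
            + f i * (∑ k, η i k * μ i k * f k)
            + lam i * f i)
          - ((∑ h, ∑ k, η h k * B i h k * g h * g k)
            - g i * (∑ k, η i k * g k)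
            + g i * (∑ k, η i k * μ i k * g k)
            + lam i * g i)|
      ≤ (4 * ηbar * c + 2 * ηbar * μbar * c + lambar) * ∑ i, |f i - g i| := by
  set D := ∑ i, |f i - g i| with hDdef
  have hD0 : 0 ≤ D := Finset.sum_nonneg fun i _ => abs_nonneg _
  have hf0 : 0 ≤ ∑ h, |f h| := Finset.sum_nonneg fun i _ => abs_nonneg _
  -- generic linear bound
  have habs : ∀ (a : Fin n → ℝ) (M : ℝ), (∀ k, |a k| ≤ M) →
      |∑ k, a k * (f k - g k)| ≤ M * D := by
    intro a M hM
    calc |∑ k, a k * (f k - g k)| ≤ ∑ k, |a k * (f k - g k)| :=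
          Finset.abs_sum_le_sum_abs _ _
      _ ≤ ∑ k, M * |f k - g k| := Finset.sum_le_sum (fun k _ => by
          rw [abs_mul]; exact mul_le_mul_of_nonneg_right (hM k) (abs_nonneg _))
      _ = M * D := by rw [← Finset.mul_sum]
  -- pointwise decomposition into four pieces
  have key : ∀ i ∈ Finset.univ,
    |((∑ h, ∑ k, η h k * B i h k * f h * f k)
            - f i * (∑ k, η i k * f k)
            + f i * (∑ k, η i k * μ i k * f k)
            + lam i * f i)
          - ((∑ h, ∑ k, η h k * B i h k * g h * g k)
            - g i * (∑ k, η i k * g k)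
            + g i * (∑ k, η i k * μ i k * g k)
            + lam i * g i)|
      ≤ (∑ h, ∑ k, η h k * B i h k * |f h * f k - g h * g k|)
        + (|f i| * (ηbar * D) + |f i - g i| * (ηbar * c))
        + (|f i| * (ηbar * μbar * D) + |f i - g i| * (ηbar * μbar * c))
        + lambar * |f i - g i| := by
    intro i _
    have e1 : (∑ h, ∑ k, η h k * B i h k * f h * f k)
            - (∑ h, ∑ k, η h k * B i h k * g h * g k)
        = ∑ h, ∑ k, η h k * B i h k * (f h * f k - g h * g k) := by
      rw [← Finset.sum_sub_distrib]
      refine Finset.sum_congr rfl fun h _ => ?_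
      rw [← Finset.sum_sub_distrib]
      refine Finset.sum_congr rfl fun k _ => ?_
      ring
    have heq : ((∑ h, ∑ k, η h k * B i h k * f h * f k)
            - f i * (∑ k, η i k * f k)
            + f i * (∑ k, η i k * μ i k * f k)
            + lam i * f i)
          - ((∑ h, ∑ k, η h k * B i h k * g h * g k)
            - g i * (∑ k, η i k * g k)
            + g i * (∑ k, η i k * μ i k * g k)
            + lam i * g i)
        = (∑ h, ∑ k, η h k * B i h k * (f h * f k - g h * g k))
          - (f i * (∑ k, η i k * f k) - g i * (∑ k, η i k * g k))
          + (f i * (∑ k, η i k * μ i k * f k) - g i * (∑ k, η i k * μ i k * g k))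
          + lam i * (f i - g i) := by
      rw [← e1]; ring
    rw [heq]
    have t1 : |∑ h, ∑ k, η h k * B i h k * (f h * f k - g h * g k)|
        ≤ ∑ h, ∑ k, η h k * B i h k * |f h * f k - g h * g k| := by
      refine le_trans (Finset.abs_sum_le_sum_abs _ _) (Finset.sum_le_sum fun h _ => ?_)
      refine le_trans (Finset.abs_sum_le_sum_abs _ _) (Finset.sum_le_sum fun k _ => ?_)
      rw [abs_mul, abs_mul, abs_of_nonneg (hη h k), abs_of_nonneg (hB i h k)]
    have t2 : |f i * (∑ k, η i k * f k) - g i * (∑ k, η i k * g k)|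
        ≤ |f i| * (ηbar * D) + |f i - g i| * (ηbar * c) := by
      have split : f i * (∑ k, η i k * f k) - g i * (∑ k, η i k * g k)
          = f i * (∑ k, η i k * (f k - g k)) + (f i - g i) * (∑ k, η i k * g k) := by
        rw [show (∑ k, η i k * (f k - g k)) = (∑ k, η i k * f k) - ∑ k, η i k * g k by
          rw [← Finset.sum_sub_distrib]; exact Finset.sum_congr rfl fun k _ => by ring]
        ring
      rw [split]
      refine le_trans (abs_add_le _ _) (add_le_add ?_ ?_)
      · rw [abs_mul]
        exact mul_le_mul_of_nonneg_left
          (habs (η i) ηbar fun k => by rw [abs_of_nonneg (hη i k)]; exact hηle i k)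
          (abs_nonneg _)
      · rw [abs_mul]
        refine mul_le_mul_of_nonneg_left ?_ (abs_nonneg _)
        calc |∑ k, η i k * g k| ≤ ∑ k, |η i k * g k| := Finset.abs_sum_le_sum_abs _ _
          _ ≤ ∑ k, ηbar * |g k| := Finset.sum_le_sum fun k _ => by
              rw [abs_mul, abs_of_nonneg (hη i k)]
              exact mul_le_mul_of_nonneg_right (hηle i k) (abs_nonneg _)
          _ = ηbar * ∑ k, |g k| := by rw [← Finset.mul_sum]
          _ ≤ ηbar * c := mul_le_mul_of_nonneg_left hg hηbar.le
    have t3 : |f i * (∑ k, η i k * μ i k * f k) - g i * (∑ k, η i k * μ i k * g k)|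
        ≤ |f i| * (ηbar * μbar * D) + |f i - g i| * (ηbar * μbar * c) := by
      have hcoef : ∀ k, |η i k * μ i k| ≤ ηbar * μbar := fun k => by
        rw [abs_mul, abs_of_nonneg (hη i k)]
        exact mul_le_mul (hηle i k) (hμle i k) (abs_nonneg _) hηbar.le
      have split : f i * (∑ k, η i k * μ i k * f k) - g i * (∑ k, η i k * μ i k * g k)
          = f i * (∑ k, η i k * μ i k * (f k - g k))
            + (f i - g i) * (∑ k, η i k * μ i k * g k) := by
        rw [show (∑ k, η i k * μ i k * (f k - g k))
            = (∑ k, η i k * μ i k * f k) - ∑ k, η i k * μ i k * g k by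
          rw [← Finset.sum_sub_distrib]; exact Finset.sum_congr rfl fun k _ => by ring]
        ring
      rw [split]
      refine le_trans (abs_add_le _ _) (add_le_add ?_ ?_)
      · rw [abs_mul]
        exact mul_le_mul_of_nonneg_left (habs (fun k => η i k * μ i k) _ hcoef)
          (abs_nonneg _)
      · rw [abs_mul]
        refine mul_le_mul_of_nonneg_left ?_ (abs_nonneg _)
        calc |∑ k, η i k * μ i k * g k| ≤ ∑ k, |η i k * μ i k * g k| :=
              Finset.abs_sum_le_sum_abs _ _
          _ ≤ ∑ k, ηbar * μbar * |g k| := Finset.sum_le_sum fun k _ => by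
              rw [abs_mul]
              exact mul_le_mul_of_nonneg_right (hcoef k) (abs_nonneg _)
          _ = ηbar * μbar * ∑ k, |g k| := by rw [← Finset.mul_sum]
          _ ≤ ηbar * μbar * c := mul_le_mul_of_nonneg_left hg
              (mul_nonneg hηbar.le hμbar.le)
    have t4 : |lam i * (f i - g i)| ≤ lambar * |f i - g i| := by
      rw [abs_mul]
      exact mul_le_mul_of_nonneg_right (hlamle i) (abs_nonneg _)
    calc |(∑ h, ∑ k, η h k * B i h k * (f h * f k - g h * g k))
          - (f i * (∑ k, η i k * f k) - g i * (∑ k, η i k * g k))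
          + (f i * (∑ k, η i k * μ i k * f k) - g i * (∑ k, η i k * μ i k * g k))
          + lam i * (f i - g i)|
        ≤ |(∑ h, ∑ k, η h k * B i h k * (f h * f k - g h * g k))
          - (f i * (∑ k, η i k * f k) - g i * (∑ k, η i k * g k))
          + (f i * (∑ k, η i k * μ i k * f k) - g i * (∑ k, η i k * μ i k * g k))|
          + |lam i * (f i - g i)| := abs_add_le _ _
      _ ≤ (|(∑ h, ∑ k, η h k * B i h k * (f h * f k - g h * g k))
          - (f i * (∑ k, η i k * f k) - g i * (∑ k, η i k * g k))|
          + |f i * (∑ k, η i k * μ i k * f k) - g i * (∑ k, η i k * μ i k * g k)|)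
          + |lam i * (f i - g i)| := add_le_add_left (abs_add_le _ _) _
      _ ≤ ((|∑ h, ∑ k, η h k * B i h k * (f h * f k - g h * g k)|
          + |f i * (∑ k, η i k * f k) - g i * (∑ k, η i k * g k)|)
          + |f i * (∑ k, η i k * μ i k * f k) - g i * (∑ k, η i k * μ i k * g k)|)
          + |lam i * (f i - g i)| :=
          add_le_add_left (add_le_add_left (abs_sub _ _) _) _
      _ ≤ _ := by
          refine add_le_add (add_le_add (add_le_add t1 t2) t3) t4
  refine le_trans (Finset.sum_le_sum key) ?_
  rw [Finset.sum_add_distrib, Finset.sum_add_distrib, Finset.sum_add_distrib]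
  have hg0 : 0 ≤ ∑ h, |g h| := Finset.sum_nonneg fun i _ => abs_nonneg _
  -- bound the quadratic sum
  have q1 : ∑ i, ∑ h, ∑ k, η h k * B i h k * |f h * f k - g h * g k|
      ≤ 2 * ηbar * c * D := by
    have swap : ∑ i, ∑ h, ∑ k, η h k * B i h k * |f h * f k - g h * g k|
        = ∑ h, ∑ k, η h k * |f h * f k - g h * g k| := by
      rw [Finset.sum_comm]
      refine Finset.sum_congr rfl fun h _ => ?_
      rw [Finset.sum_comm]
      refine Finset.sum_congr rfl fun k _ => ?_
      have : ∑ i, η h k * B i h k * |f h * f k - g h * g k|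
          = (η h k * |f h * f k - g h * g k|) * ∑ i, B i h k := by
        rw [Finset.mul_sum]; exact Finset.sum_congr rfl fun i _ => by ring
      rw [this, hBsum, mul_one]
    rw [swap]
    have step1 : ∑ h, ∑ k, η h k * |f h * f k - g h * g k|
        ≤ ηbar * ∑ h, ∑ k, |f h * f k - g h * g k| := by
      rw [Finset.mul_sum]
      refine Finset.sum_le_sum fun h _ => ?_
      rw [Finset.mul_sum]
      exact Finset.sum_le_sum fun k _ =>
        mul_le_mul_of_nonneg_right (hηle h k) (abs_nonneg _)
    have step2 : ∑ h, ∑ k, |f h * f k - g h * g k|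
        ≤ ∑ h, ∑ k, (|f h| * |f k - g k| + |f h - g h| * |g k|) := by
      refine Finset.sum_le_sum fun h _ => Finset.sum_le_sum fun k _ => ?_
      have : f h * f k - g h * g k = f h * (f k - g k) + (f h - g h) * g k := by ring
      rw [this]
      exact le_trans (abs_add_le _ _) (by rw [abs_mul, abs_mul])
    have step3 : ∑ h, ∑ k, (|f h| * |f k - g k| + |f h - g h| * |g k|)
        = (∑ h, |f h|) * D + D * (∑ k, |g k|) := by
      calc ∑ h, ∑ k, (|f h| * |f k - g k| + |f h - g h| * |g k|)
          = ∑ h, (|f h| * D + |f h - g h| * ∑ k, |g k|) := by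
            refine Finset.sum_congr rfl fun h _ => ?_
            rw [Finset.sum_add_distrib, ← Finset.mul_sum, ← Finset.mul_sum, hDdef]
        _ = (∑ h, |f h|) * D + D * (∑ k, |g k|) := by
            rw [Finset.sum_add_distrib, ← Finset.sum_mul, ← Finset.sum_mul, hDdef]
    have step4 : (∑ h, |f h|) * D + D * (∑ k, |g k|) ≤ c * D + D * c := by
      exact add_le_add (mul_le_mul_of_nonneg_right hf hD0)
        (mul_le_mul_of_nonneg_left hg hD0)
    calc ∑ h, ∑ k, η h k * |f h * f k - g h * g k|
        ≤ ηbar * ∑ h, ∑ k, |f h * f k - g h * g k| := step1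
      _ ≤ ηbar * ((∑ h, |f h|) * D + D * (∑ k, |g k|)) := by
          refine mul_le_mul_of_nonneg_left ?_ hηbar.le
          rw [← step3]; exact step2
      _ ≤ ηbar * (c * D + D * c) := mul_le_mul_of_nonneg_left step4 hηbar.le
      _ = 2 * ηbar * c * D := by ring
  have s1 : ∑ i, (|f i| * (ηbar * D) + |f i - g i| * (ηbar * c))
      ≤ 2 * ηbar * c * D := by
    rw [Finset.sum_add_distrib, ← Finset.sum_mul, ← Finset.sum_mul]
    have h1 : (∑ i, |f i|) * (ηbar * D) ≤ c * (ηbar * D) :=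
      mul_le_mul_of_nonneg_right hf (mul_nonneg hηbar.le hD0)
    nlinarith [hD0, hηbar.le, hc.le]
  have s2 : ∑ i, (|f i| * (ηbar * μbar * D) + |f i - g i| * (ηbar * μbar * c))
      ≤ 2 * ηbar * μbar * c * D := by
    rw [Finset.sum_add_distrib, ← Finset.sum_mul, ← Finset.sum_mul]
    have h1 : (∑ i, |f i|) * (ηbar * μbar * D) ≤ c * (ηbar * μbar * D) :=
      mul_le_mul_of_nonneg_right hf
        (mul_nonneg (mul_nonneg hηbar.le hμbar.le) hD0)
    nlinarith [hD0, hηbar.le, hμbar.le, hc.le]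
  have s3 : ∑ i, lambar * |f i - g i| = lambar * D := by rw [← Finset.mul_sum]
  nlinarith [q1, s1, s2, s3, hD0]
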